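/- For all coprime positive integers a and b, 4a·I(a,b) + 4b·I(b,a) = (a-1)(b-1)(a+b-1). -/

import Mathlib

/-- The sawtooth function ((x)) = x - ⌊x⌋ - 1/2 for non-integer x, and 0 for integer x. -/
def saw (x : ℚ) : ℚ := if x.den = 1 then 0 else x - ⌊x⌋ - 1/2

/-- The Dedekind sum s(a,b) = Σ_{k=1}^{b-1} ((k/b))((ka/b)). -/
def dedekindSum (a b : ℕ) : ℚ :=
  ∑ k ∈ Finset.range b, saw ((k : ℚ) / b) * saw ((k * a : ℚ) / b)

/-- I(a,b): the number of inversions of the permutation x ↦ ax mod b on {0,...,b-1}. -/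
def inv' (a b : ℕ) : ℕ :=
  (((Finset.range b) ×ˢ (Finset.range b)).filter
    (fun p => p.1 < p.2 ∧ (a * p.2) % b < (a * p.1) % b)).card

open Finset

private lemma sum_id (n : ℕ) : 2 * ∑ k ∈ range n, (k : ℤ) = n * (n - 1) := by
  induction n with
  | zero => simp
  | succ n ih => rw [Finset.sum_range_succ]; push_cast; push_cast at ih; linear_combination ih

private lemma sum_sq (n : ℕ) : 6 * ∑ k ∈ range n, (k : ℤ)^2 = n * (n - 1) * (2*n - 1) := by
  induction n with
  | zero => simp
  | succ n ih => rw [Finset.sum_range_succ]; push_cast; push_cast at ih; linear_combination ih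

private lemma ind_helper (b q1 q2 q3 r1 r2 r3 : ℕ) (hb : 0 < b)
    (h : b*q3 + r3 = b*q1 + r1 + (b*q2 + r2)) (h1 : r1 < b) (h2 : r2 < b) (h3 : r3 < b) :
    (if r3 < r1 then (1:ℤ) else 0) = (q3:ℤ) - q1 - q2 := by
  have hb' : (0:ℤ) < b := by exact_mod_cast hb
  have h1' : (r1:ℤ) < b := by exact_mod_cast h1
  have h2' : (r2:ℤ) < b := by exact_mod_cast h2
  have h3' : (r3:ℤ) < b := by exact_mod_cast h3
  have p1 : (0:ℤ) ≤ r1 := by positivity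
  have p2 : (0:ℤ) ≤ r2 := by positivity
  have p3 : (0:ℤ) ≤ r3 := by positivity
  have key : (b:ℤ) * ((q3:ℤ) - q1 - q2) = (r1:ℤ) + r2 - r3 := by
    have h' : (b:ℤ)*q3 + r3 = b*q1 + r1 + (b*q2 + r2) := by exact_mod_cast h
    linear_combination h'
  set t : ℤ := (q3:ℤ) - q1 - q2 with ht
  split_ifs with hc
  · have hc' : (r3:ℤ) < r1 := by exact_mod_cast hc
    have hge : 1 ≤ t := by nlinarith [key]
    have hle : t ≤ 1 := by nlinarith [key]
    linarith
  · have hc' : (r1:ℤ) ≤ r3 := by exact_mod_cast Nat.le_of_not_lt hc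
    have hge : 0 ≤ t := by nlinarith [key]
    have hle : t ≤ 0 := by nlinarith [key]
    linarith

private lemma inv_eq (a b : ℕ) (hb : 0 < b) :
    (inv' a b : ℤ) = ∑ i ∈ range b, ∑ j ∈ Ico (i+1) b,
      (((a*j/b : ℕ) : ℤ) - ((a*i/b : ℕ) : ℤ) - ((a*(j-i)/b : ℕ) : ℤ)) := by
  rw [inv', Finset.card_filter]
  rw [Nat.cast_sum]
  rw [Finset.sum_product]
  push_cast
  refine Finset.sum_congr rfl (fun i hi => ?_)
  have hib : i < b := Finset.mem_range.mp hi
  have step1 : ∑ j ∈ range b, (if i < j ∧ (a*j) % b < (a*i) % b then (1:ℤ) else 0)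
      = ∑ j ∈ Ico (i+1) b, (if (a*j) % b < (a*i) % b then (1:ℤ) else 0) := by
    rw [Finset.range_eq_Ico]
    rw [← Finset.sum_Ico_consecutive _ (Nat.zero_le (i+1)) (by omega : i+1 ≤ b)]
    have z : ∑ j ∈ Ico 0 (i+1), (if i < j ∧ (a*j) % b < (a*i) % b then (1:ℤ) else 0) = 0 := by
      apply Finset.sum_eq_zero
      intro j hj
      have : ¬ (i < j) := by simp at hj; omega
      simp [this]
    rw [z, zero_add]
    refine Finset.sum_congr rfl (fun j hj => ?_)
    have : i < j := by simp at hj; omega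
    simp [this]
  rw [step1]
  refine Finset.sum_congr rfl (fun j hj => ?_)
  have hij : i < j := by simp at hj; omega
  have hjb : j < b := by simp at hj; omega
  have hsplit : a * j = a * i + a * (j - i) := by
    rw [← Nat.mul_add]
    congr 1
    omega
  have e1 := Nat.div_add_mod (a*i) b
  have e2 := Nat.div_add_mod (a*(j-i)) b
  have e3 := Nat.div_add_mod (a*j) b
  have := ind_helper b (a*i/b) (a*(j-i)/b) (a*j/b) ((a*i)%b) ((a*(j-i))%b) ((a*j)%b) hb
    (by omega) (Nat.mod_lt _ hb) (Nat.mod_lt _ hb) (Nat.mod_lt _ hb)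
  push_cast
  push_cast at this
  rw [← this]

private lemma g_pair (a b k : ℕ) (ha : 0 < a) (hb : 0 < b) (hab : Nat.Coprime a b)
    (h1 : 1 ≤ k) (h2 : k < b) :
    ((a*k/b : ℕ):ℤ) + ((a*(b-k)/b : ℕ):ℤ) = (a:ℤ) - 1 := by
  have hr1 : 0 < a*k % b := by
    rcases Nat.eq_zero_or_pos (a*k % b) with h | h
    · exfalso
      have hdvd : b ∣ a * k := Nat.dvd_of_mod_eq_zero h
      have : b ∣ k := (Nat.Coprime.dvd_of_dvd_mul_left hab.symm) hdvd
      have := Nat.le_of_dvd (by omega) this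
      omega
    · exact h
  have hr2 : 0 < a*(b-k) % b := by
    rcases Nat.eq_zero_or_pos (a*(b-k) % b) with h | h
    · exfalso
      have hdvd : b ∣ a * (b-k) := Nat.dvd_of_mod_eq_zero h
      have : b ∣ (b-k) := (Nat.Coprime.dvd_of_dvd_mul_left hab.symm) hdvd
      have := Nat.le_of_dvd (by omega) this
      omega
    · exact h
  have e1 := Nat.div_add_mod (a*k) b
  have e2 := Nat.div_add_mod (a*(b-k)) b
  have hm1 : a*k % b < b := Nat.mod_lt _ hb
  have hm2 : a*(b-k) % b < b := Nat.mod_lt _ hb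
  have hsum : a*k + a*(b-k) = a*b := by rw [← Nat.mul_add]; congr 1; omega
  -- cast everything to ℤ
  have e1' : (b:ℤ) * ((a*k/b : ℕ):ℤ) + ((a*k % b : ℕ):ℤ) = (a:ℤ)*k := by exact_mod_cast e1
  have e2' : (b:ℤ) * ((a*(b-k)/b : ℕ):ℤ) + ((a*(b-k) % b : ℕ):ℤ) = (a:ℤ)*((b:ℤ)-(k:ℤ)) := by
    have h' : (b:ℤ) * ((a*(b-k)/b : ℕ):ℤ) + ((a*(b-k) % b : ℕ):ℤ) = (a:ℤ)*((b-k : ℕ):ℤ) := by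
      exact_mod_cast e2
    rwa [Nat.cast_sub h2.le] at h'
  have hb' : (0:ℤ) < b := by exact_mod_cast hb
  have hr1' : (0:ℤ) < ((a*k % b : ℕ):ℤ) := by exact_mod_cast hr1
  have hr2' : (0:ℤ) < ((a*(b-k) % b : ℕ):ℤ) := by exact_mod_cast hr2
  have hm1' : ((a*k % b : ℕ):ℤ) < b := by exact_mod_cast hm1
  have hm2' : ((a*(b-k) % b : ℕ):ℤ) < b := by exact_mod_cast hm2
  set q1 : ℤ := ((a*k/b : ℕ):ℤ)
  set q2 : ℤ := ((a*(b-k)/b : ℕ):ℤ)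
  set r1 : ℤ := ((a*k % b : ℕ):ℤ)
  set r2 : ℤ := ((a*(b-k) % b : ℕ):ℤ)
  have key : (b:ℤ) * (q1 + q2 - (a - 1)) = (b:ℤ) - r1 - r2 := by
    have : (a:ℤ)*k + (a:ℤ)*((b:ℤ)-k) = (a:ℤ)*b := by ring
    linear_combination e1' + e2' - this
  have hge : 0 ≤ q1 + q2 - ((a:ℤ) - 1) := by nlinarith [key]
  have hle : q1 + q2 - ((a:ℤ) - 1) ≤ 0 := by nlinarith [key]
  linarith

private lemma Fval (a b : ℕ) (ha : 0 < a) (hb : 0 < b) (hab : Nat.Coprime a b) :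
    2 * ∑ k ∈ range b, ((a*k/b : ℕ):ℤ) = ((a:ℤ) - 1) * ((b:ℤ) - 1) := by
  have hgb : ((a*b/b : ℕ):ℤ) = (a:ℤ) := by rw [Nat.mul_div_cancel _ hb]
  have hg0 : ((a*0/b : ℕ):ℤ) = 0 := by simp
  have refl1 : ∑ k ∈ range b, ((a*(b-k)/b : ℕ):ℤ)
      = (∑ k ∈ range b, ((a*k/b : ℕ):ℤ)) + (a:ℤ) := by
    calc ∑ k ∈ range b, ((a*(b-k)/b : ℕ):ℤ)
        = ∑ k ∈ range b, ((a*(b-(b-1-k))/b : ℕ):ℤ) :=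
          (Finset.sum_range_reflect (fun k => ((a*(b-k)/b : ℕ):ℤ)) b).symm
      _ = ∑ k ∈ range b, ((a*(k+1)/b : ℕ):ℤ) := by
          refine Finset.sum_congr rfl (fun k hk => ?_)
          have : k < b := Finset.mem_range.mp hk
          rw [show b - (b-1-k) = k+1 by omega]
      _ = ∑ k ∈ range (b+1), ((a*k/b : ℕ):ℤ) - ((a*0/b : ℕ):ℤ) := by
          rw [Finset.sum_range_succ']; ring
      _ = (∑ k ∈ range b, ((a*k/b : ℕ):ℤ)) + (a:ℤ) := by
          rw [Finset.sum_range_succ, hgb, hg0]; ring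
  have pairs : ∑ k ∈ range b, (((a*k/b : ℕ):ℤ) + ((a*(b-k)/b : ℕ):ℤ))
      = (a:ℤ) + ((b:ℤ) - 1) * ((a:ℤ) - 1) := by
    rw [Finset.range_eq_Ico, Finset.sum_eq_sum_Ico_succ_bot hb]
    have hbot : ((a*0/b : ℕ):ℤ) + ((a*(b-0)/b : ℕ):ℤ) = (a:ℤ) := by
      rw [hg0]; simp only [Nat.sub_zero]; rw [hgb]; ring
    rw [hbot]
    have hrest : ∑ k ∈ Ico 1 b, (((a*k/b : ℕ):ℤ) + ((a*(b-k)/b : ℕ):ℤ))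
        = ((b:ℤ) - 1) * ((a:ℤ) - 1) := by
      rw [Finset.sum_congr rfl (fun k hk => by
        have h1 : 1 ≤ k := (Finset.mem_Ico.mp hk).1
        have h2 : k < b := (Finset.mem_Ico.mp hk).2
        exact g_pair a b k ha hb hab h1 h2)]
      rw [Finset.sum_const, Nat.card_Ico]
      rw [nsmul_eq_mul, Nat.cast_sub (by omega : 1 ≤ b)]
      push_cast
      ring
    rw [hrest]
  rw [Finset.sum_add_distrib, refl1] at pairs
  linarith

private def Ssum (a b : ℕ) : ℤ := ∑ k ∈ range b, (k : ℤ) * ((a*k/b : ℕ):ℤ)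

private lemma two_inv (a b : ℕ) (ha : 0 < a) (hb : 0 < b) (hab : Nat.Coprime a b) :
    2 * (inv' a b : ℤ) = 6 * Ssum a b + (1 - 2*(b:ℤ)) * (((a:ℤ) - 1) * ((b:ℤ) - 1)) := by
  have hI := inv_eq a b hb
  have hsplit : ∑ i ∈ range b, ∑ j ∈ Ico (i+1) b,
      (((a*j/b : ℕ) : ℤ) - ((a*i/b : ℕ) : ℤ) - ((a*(j-i)/b : ℕ) : ℤ))
      = (∑ i ∈ range b, ∑ j ∈ Ico (i+1) b, ((a*j/b : ℕ) : ℤ))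
      - (∑ i ∈ range b, ∑ j ∈ Ico (i+1) b, ((a*i/b : ℕ) : ℤ))
      - (∑ i ∈ range b, ∑ j ∈ Ico (i+1) b, ((a*(j-i)/b : ℕ) : ℤ)) := by
    simp only [Finset.sum_sub_distrib]
  have T1 : ∑ i ∈ range b, ∑ j ∈ Ico (i+1) b, ((a*j/b : ℕ) : ℤ)
      = ∑ k ∈ range b, (k:ℤ) * ((a*k/b : ℕ):ℤ) := by
    rw [Finset.range_eq_Ico, Finset.sum_Ico_Ico_comm' 0 b (fun i j => ((a*j/b : ℕ) : ℤ))]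
    refine Finset.sum_congr rfl (fun j hj => ?_)
    rw [Finset.sum_const, Nat.card_Ico, Nat.sub_zero, nsmul_eq_mul]
  have T2 : ∑ i ∈ range b, ∑ j ∈ Ico (i+1) b, ((a*i/b : ℕ) : ℤ)
      = ∑ k ∈ range b, ((b - (k+1) : ℕ):ℤ) * ((a*k/b : ℕ):ℤ) := by
    refine Finset.sum_congr rfl (fun i hi => ?_)
    rw [Finset.sum_const, Nat.card_Ico, nsmul_eq_mul]
  have T3 : ∑ i ∈ range b, ∑ j ∈ Ico (i+1) b, ((a*(j-i)/b : ℕ) : ℤ)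
      = ∑ k ∈ range b, ((b - k : ℕ):ℤ) * ((a*k/b : ℕ):ℤ) := by
    have inner : ∀ i, ∑ j ∈ Ico (i+1) b, ((a*(j-i)/b : ℕ) : ℤ)
        = ∑ t ∈ range (b - (i+1)), ((a*(t+1)/b : ℕ) : ℤ) := by
      intro i
      rw [Finset.sum_Ico_eq_sum_range]
      refine Finset.sum_congr rfl (fun t ht => ?_)
      rw [show (i+1+t) - i = t+1 by omega]
    have step1 : ∑ i ∈ range b, ∑ j ∈ Ico (i+1) b, ((a*(j-i)/b : ℕ) : ℤ)
        = ∑ i ∈ range b, ∑ t ∈ range (b - 1 - i), ((a*(t+1)/b : ℕ) : ℤ) := by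
      refine Finset.sum_congr rfl (fun i hi => ?_)
      rw [inner i, show b - (i+1) = b - 1 - i by omega]
    rw [step1]
    rw [Finset.sum_range_reflect (fun i => ∑ t ∈ range i, ((a*(t+1)/b : ℕ) : ℤ)) b]
    have step2 : ∑ i ∈ range b, ∑ t ∈ range i, ((a*(t+1)/b : ℕ) : ℤ)
        = ∑ t ∈ range b, ∑ i ∈ Ico (t+1) b, ((a*(t+1)/b : ℕ) : ℤ) := by
      simp only [Finset.range_eq_Ico]; rw [← Finset.sum_Ico_Ico_comm' 0 b (fun t i => ((a*(t+1)/b : ℕ) : ℤ))]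
    rw [step2]
    have step3 : ∑ t ∈ range b, ∑ i ∈ Ico (t+1) b, ((a*(t+1)/b : ℕ) : ℤ)
        = ∑ t ∈ range b, ((b - (t+1) : ℕ):ℤ) * ((a*(t+1)/b : ℕ):ℤ) := by
      refine Finset.sum_congr rfl (fun t ht => ?_)
      rw [Finset.sum_const, Nat.card_Ico, nsmul_eq_mul]
    rw [step3]
    have hs := Finset.sum_range_succ' (fun k => ((b - k : ℕ):ℤ) * ((a*k/b : ℕ):ℤ)) b
    rw [Finset.sum_range_succ] at hs
    simp only [Nat.sub_self, Nat.sub_zero, Nat.mul_zero, Nat.zero_div, Nat.cast_zero,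
      Nat.cast_ofNat, mul_zero, zero_mul, add_zero] at hs
    linarith [hs]
  rw [hsplit, T1, T2, T3] at hI
  have comb : ∑ k ∈ range b, (k:ℤ) * ((a*k/b : ℕ):ℤ)
      - ∑ k ∈ range b, ((b - (k+1) : ℕ):ℤ) * ((a*k/b : ℕ):ℤ)
      - ∑ k ∈ range b, ((b - k : ℕ):ℤ) * ((a*k/b : ℕ):ℤ)
      = ∑ k ∈ range b, (3*(k:ℤ) - 2*(b:ℤ) + 1) * ((a*k/b : ℕ):ℤ) := by
    rw [← Finset.sum_sub_distrib, ← Finset.sum_sub_distrib]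
    refine Finset.sum_congr rfl (fun k hk => ?_)
    have hkb : k < b := Finset.mem_range.mp hk
    rw [Nat.cast_sub (by omega : k+1 ≤ b), Nat.cast_sub (by omega : k ≤ b)]
    push_cast
    ring
  rw [comb] at hI
  have expand : ∑ k ∈ range b, (3*(k:ℤ) - 2*(b:ℤ) + 1) * ((a*k/b : ℕ):ℤ)
      = 3 * Ssum a b + (1 - 2*(b:ℤ)) * ∑ k ∈ range b, ((a*k/b : ℕ):ℤ) := by
    rw [Ssum, Finset.mul_sum, Finset.mul_sum, ← Finset.sum_add_distrib]
    refine Finset.sum_congr rfl (fun k hk => ?_)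
    ring
  rw [expand] at hI
  have hF := Fval a b ha hb hab
  linear_combination 2*hI + (1 - 2*(b:ℤ)) * hF

private def Dsum (a b : ℕ) : ℤ := ∑ k ∈ Ico 1 b, ∑ m ∈ Ico 1 a, |(a:ℤ) * k - (b:ℤ) * m|

private lemma count_lemma (a b k : ℕ) (ha : 0 < a) (hb : 0 < b) (hab : Nat.Coprime a b)
    (hk : k < b) :
    Finset.filter (fun m => b*m < a*k) (Finset.Ico 1 a) = Finset.Ico 1 (a*k/b + 1) := by
  ext m
  simp only [Finset.mem_filter, Finset.mem_Ico]
  constructor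
  · rintro ⟨⟨h1m, hma⟩, hlt⟩
    refine ⟨h1m, ?_⟩
    have hle : m * b ≤ a * k := by rw [mul_comm] at hlt; exact hlt.le
    have := (Nat.le_div_iff_mul_le hb).mpr hle
    omega
  · rintro ⟨h1m, hm⟩
    have hmle : m ≤ a*k/b := by omega
    have hle : m * b ≤ a * k := (Nat.le_div_iff_mul_le hb).mp hmle
    have hne : m * b ≠ a * k := by
      intro he
      have hdvd : b ∣ a * k := Dvd.intro_left m he
      have hbk : b ∣ k := (Nat.Coprime.dvd_of_dvd_mul_left hab.symm) hdvd
      rcases Nat.eq_zero_or_pos k with hk0 | hk0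
      · subst hk0
        simp at he
        omega
      · have := Nat.le_of_dvd hk0 hbk
        omega
    have hdiv_lt : a*k/b < a := by
      rw [Nat.div_lt_iff_lt_mul hb]
      exact Nat.mul_lt_mul_of_le_of_lt (le_refl a) hk ha
    have hma : m < a := by omega
    exact ⟨⟨h1m, hma⟩, by rw [mul_comm b m]; omega⟩

private lemma aS_eq (a b : ℕ) (ha : 0 < a) (hb : 0 < b) (hab : Nat.Coprime a b) :
    (a:ℤ) * Ssum a b
      = ∑ k ∈ Ico 1 b, ∑ m ∈ Ico 1 a, (if b*m < a*k then (a:ℤ)*k else 0) := by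
  have step : ∀ k, k < b → (a:ℤ)*((k:ℤ) * ((a*k/b : ℕ):ℤ))
      = ∑ m ∈ Ico 1 a, (if b*m < a*k then (a:ℤ)*k else 0) := by
    intro k hk
    rw [← Finset.sum_filter, count_lemma a b k ha hb hab hk, Finset.sum_const, Nat.card_Ico,
      Nat.add_sub_cancel, nsmul_eq_mul]
    ring
  rw [Ssum, Finset.mul_sum, Finset.range_eq_Ico, Finset.sum_eq_sum_Ico_succ_bot hb]
  rw [show (a:ℤ) * (((0:ℕ):ℤ) * ((a*0/b : ℕ):ℤ)) = 0 by push_cast; ring, zero_add]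
  exact Finset.sum_congr rfl (fun k hk => step k (Finset.mem_Ico.mp hk).2)

private lemma recip (a b : ℕ) (ha : 0 < a) (hb : 0 < b) (hab : Nat.Coprime a b) :
    4 * ((a:ℤ) * Ssum a b + (b:ℤ) * Ssum b a)
      = 2 * (a:ℤ) * b * ((a:ℤ)-1) * ((b:ℤ)-1) + 2 * Dsum a b := by
  have h1 := aS_eq a b ha hb hab
  have h2 := aS_eq b a hb ha hab.symm
  rw [Finset.sum_comm] at h2
  have key : ∀ k ∈ Ico 1 b, ∀ m ∈ Ico 1 a,
      2*(if b*m < a*k then (a:ℤ)*k else 0) + 2*(if a*k < b*m then (b:ℤ)*m else 0)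
        = (a:ℤ)*k + (b:ℤ)*m + |(a:ℤ)*k - (b:ℤ)*m| := by
    intro k hk m hm
    have hk' := Finset.mem_Ico.mp hk
    have hm' := Finset.mem_Ico.mp hm
    have hne : a*k ≠ b*m := by
      intro he
      have hdvd : b ∣ a * k := Dvd.intro m he.symm
      have hbk : b ∣ k := (Nat.Coprime.dvd_of_dvd_mul_left hab.symm) hdvd
      have := Nat.le_of_dvd (by omega) hbk
      omega
    rcases Nat.lt_trichotomy (b*m) (a*k) with h | h | h
    · rw [if_pos h, if_neg (by omega)]
      have h' : (b:ℤ)*m < (a:ℤ)*k := by exact_mod_cast h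
      rw [abs_of_nonneg (by linarith)]; ring
    · exact absurd h.symm hne
    · rw [if_neg (by omega), if_pos h]
      have h' : (a:ℤ)*k < (b:ℤ)*m := by exact_mod_cast h
      rw [abs_of_nonpos (by linarith)]; ring
  have hdouble : 2*((a:ℤ)*Ssum a b) + 2*((b:ℤ)*Ssum b a)
      = (∑ k ∈ Ico 1 b, ∑ m ∈ Ico 1 a, ((a:ℤ)*k + (b:ℤ)*m)) + Dsum a b := by
    have l1 : 2*((a:ℤ)*Ssum a b)
        = ∑ k ∈ Ico 1 b, ∑ m ∈ Ico 1 a, 2*(if b*m < a*k then (a:ℤ)*k else 0) := by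
      rw [h1, Finset.mul_sum]
      exact Finset.sum_congr rfl (fun k _ => by rw [Finset.mul_sum])
    have l2 : 2*((b:ℤ)*Ssum b a)
        = ∑ k ∈ Ico 1 b, ∑ m ∈ Ico 1 a, 2*(if a*k < b*m then (b:ℤ)*m else 0) := by
      rw [h2, Finset.mul_sum]
      exact Finset.sum_congr rfl (fun k _ => by rw [Finset.mul_sum])
    rw [l1, l2, ← Finset.sum_add_distrib, Dsum, ← Finset.sum_add_distrib]
    refine Finset.sum_congr rfl (fun k hk => ?_)
    rw [← Finset.sum_add_distrib, ← Finset.sum_add_distrib]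
    exact Finset.sum_congr rfl (fun m hm => key k hk m hm)
  -- evaluate the (ak+bm) double sum
  have hSB : 2 * ∑ k ∈ Ico 1 b, (k:ℤ) = (b:ℤ)*((b:ℤ)-1) := by
    have h := sum_id b
    rw [Finset.range_eq_Ico, Finset.sum_eq_sum_Ico_succ_bot hb] at h
    push_cast [Nat.cast_sub (by omega : 1 ≤ b)] at h ⊢
    linarith
  have hSA : 2 * ∑ m ∈ Ico 1 a, (m:ℤ) = (a:ℤ)*((a:ℤ)-1) := by
    have h := sum_id a
    rw [Finset.range_eq_Ico, Finset.sum_eq_sum_Ico_succ_bot ha] at h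
    push_cast [Nat.cast_sub (by omega : 1 ≤ a)] at h ⊢
    linarith
  have hXY : ∑ k ∈ Ico 1 b, ∑ m ∈ Ico 1 a, ((a:ℤ)*k + (b:ℤ)*m)
      = (((a:ℤ)-1) * (a:ℤ)) * (∑ k ∈ Ico 1 b, (k:ℤ))
        + (((b:ℤ)-1) * (b:ℤ)) * (∑ m ∈ Ico 1 a, (m:ℤ)) := by
    have inner : ∀ k : ℕ, ∑ m ∈ Ico 1 a, ((a:ℤ)*k + (b:ℤ)*m)
        = (((a:ℤ)-1) * (a:ℤ)) * (k:ℤ) + (b:ℤ) * ∑ m ∈ Ico 1 a, (m:ℤ) := by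
      intro k
      rw [Finset.sum_add_distrib, Finset.sum_const, Nat.card_Ico, nsmul_eq_mul,
        ← Finset.mul_sum, Nat.cast_sub (by omega : 1 ≤ a)]
      push_cast
      ring
    rw [Finset.sum_congr rfl (fun k _ => inner k), Finset.sum_add_distrib,
      ← Finset.mul_sum, Finset.sum_const, Nat.card_Ico, nsmul_eq_mul,
      Nat.cast_sub (by omega : 1 ≤ b)]
    push_cast
    ring
  linear_combination 2*hdouble + 2*hXY + ((a:ℤ)-1)*(a:ℤ)*hSB + ((b:ℤ)-1)*(b:ℤ)*hSA

private def ExtT (a b k : ℕ) : ℤ :=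
  (∑ t ∈ range k, ((a:ℤ)*k + (b:ℤ)*t)) + (∑ t ∈ Ico a (a+b-k), ((b:ℤ)*t - (a:ℤ)*k))

private lemma Dsymm (a b : ℕ) : Dsum a b = Dsum b a := by
  rw [Dsum, Dsum, Finset.sum_comm]
  exact Finset.sum_congr rfl fun k _ => Finset.sum_congr rfl fun m _ => abs_sub_comm _ _

private lemma dstep_k (a b k : ℕ) (ha : 0 < a) (hk1 : 1 ≤ k) (hk2 : k < b) :
    ∑ m ∈ Ico 1 (a+b), |((a+b:ℕ):ℤ)*k - (b:ℤ)*m|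
      = (∑ m ∈ Ico 1 a, |(a:ℤ)*k - (b:ℤ)*m|) + ExtT a b k := by
  have split1 : ∑ m ∈ Ico 1 (a+b), |((a+b:ℕ):ℤ)*k - (b:ℤ)*m|
      = (∑ m ∈ Ico 1 (k+a), |((a+b:ℕ):ℤ)*k - (b:ℤ)*m|)
        + ∑ m ∈ Ico (k+a) (a+b), |((a+b:ℕ):ℤ)*k - (b:ℤ)*m| :=
    (Finset.sum_Ico_consecutive _ (by omega) (by omega)).symm
  have split2 : ∑ m ∈ Ico 1 (k+a), |((a+b:ℕ):ℤ)*k - (b:ℤ)*m|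
      = (∑ m ∈ Ico 1 (k+1), |((a+b:ℕ):ℤ)*k - (b:ℤ)*m|)
        + ∑ m ∈ Ico (k+1) (k+a), |((a+b:ℕ):ℤ)*k - (b:ℤ)*m| :=
    (Finset.sum_Ico_consecutive _ (by omega) (by omega)).symm
  have p1 : ∑ m ∈ Ico 1 (k+1), |((a+b:ℕ):ℤ)*k - (b:ℤ)*m|
      = ∑ t ∈ range k, ((a:ℤ)*k + (b:ℤ)*t) := by
    rw [Finset.sum_Ico_eq_sum_range]
    simp only [Nat.add_sub_cancel]
    rw [← Finset.sum_range_reflect (fun t => (a:ℤ)*k + (b:ℤ)*t) k]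
    refine Finset.sum_congr rfl fun t ht => ?_
    have ht' : t < k := Finset.mem_range.mp ht
    have hnn : (0:ℤ) ≤ ((a+b:ℕ):ℤ)*k - (b:ℤ)*((1+t : ℕ):ℤ) := by
      push_cast
      nlinarith [mul_nonneg (show (0:ℤ) ≤ (b:ℤ) by positivity)
          (show (0:ℤ) ≤ (k:ℤ)-1-(t:ℤ) by omega),
        mul_nonneg (show (0:ℤ) ≤ (a:ℤ) by positivity) (show (0:ℤ) ≤ (k:ℤ) by positivity)]
    rw [abs_of_nonneg hnn]
    have hcast : ((k-1-t : ℕ):ℤ) = (k:ℤ)-1-(t:ℤ) := by omega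
    simp only [hcast]
    push_cast
    ring
  have p2 : ∑ m ∈ Ico (k+1) (k+a), |((a+b:ℕ):ℤ)*k - (b:ℤ)*m|
      = ∑ m ∈ Ico 1 a, |(a:ℤ)*k - (b:ℤ)*m| := by
    rw [Finset.sum_Ico_eq_sum_range, Finset.sum_Ico_eq_sum_range]
    rw [show k+a-(k+1) = a-1 by omega]
    refine Finset.sum_congr rfl fun t ht => ?_
    have harg : ((a+b:ℕ):ℤ)*k - (b:ℤ)*((k+1+t : ℕ):ℤ) = (a:ℤ)*k - (b:ℤ)*((1+t : ℕ):ℤ) := by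
      push_cast; ring
    rw [harg]
  have p3 : ∑ m ∈ Ico (k+a) (a+b), |((a+b:ℕ):ℤ)*k - (b:ℤ)*m|
      = ∑ t ∈ Ico a (a+b-k), ((b:ℤ)*t - (a:ℤ)*k) := by
    rw [Finset.sum_Ico_eq_sum_range, Finset.sum_Ico_eq_sum_range]
    rw [show (a+b)-(k+a) = b-k by omega, show (a+b-k)-a = b-k by omega]
    refine Finset.sum_congr rfl fun t ht => ?_
    have hle : ((a+b:ℕ):ℤ)*k - (b:ℤ)*((k+a+t : ℕ):ℤ) ≤ 0 := by
      push_cast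
      nlinarith [mul_nonneg (show (0:ℤ) ≤ (a:ℤ) by positivity)
          (show (0:ℤ) ≤ (b:ℤ)-(k:ℤ) by omega),
        mul_nonneg (show (0:ℤ) ≤ (b:ℤ) by positivity) (show (0:ℤ) ≤ (t:ℤ) by positivity)]
    rw [abs_of_nonpos hle]
    push_cast
    ring
  rw [split1, split2, p1, p2, p3, ExtT]
  ring

private lemma Dstep (a b : ℕ) (ha : 0 < a) (hb : 0 < b) :
    Dsum (a+b) b = Dsum a b + ∑ k ∈ Ico 1 b, ExtT a b k := by
  rw [Dsum, Dsum, ← Finset.sum_add_distrib]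
  refine Finset.sum_congr rfl fun k hk => ?_
  have hk' := Finset.mem_Ico.mp hk
  exact dstep_k a b k ha hk'.1 hk'.2

private lemma ext_val (a b k : ℕ) (hk : k ≤ b) :
    2 * ExtT a b k = (4*(a:ℤ)+2*(b:ℤ))*(k:ℤ)^2 - (4*(a:ℤ)*(b:ℤ)+2*(b:ℤ)^2)*(k:ℤ)
      + (b:ℤ)*(((a:ℤ)+(b:ℤ))*((a:ℤ)+(b:ℤ)-1) - (a:ℤ)*((a:ℤ)-1)) := by
  have h1 : ∑ t ∈ range k, ((a:ℤ)*k + (b:ℤ)*t)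
      = (k:ℤ)*((a:ℤ)*k) + (b:ℤ) * ∑ t ∈ range k, (t:ℤ) := by
    rw [Finset.sum_add_distrib, Finset.sum_const, Finset.card_range, nsmul_eq_mul,
      ← Finset.mul_sum]
  have h2 : ∑ t ∈ Ico a (a+b-k), ((b:ℤ)*t - (a:ℤ)*k)
      = (b:ℤ) * (∑ t ∈ Ico a (a+b-k), (t:ℤ)) - ((b:ℤ)-(k:ℤ))*((a:ℤ)*k) := by
    rw [Finset.sum_sub_distrib, Finset.sum_const, Nat.card_Ico, nsmul_eq_mul,
      ← Finset.mul_sum]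
    have : ((a+b-k-a : ℕ):ℤ) = (b:ℤ)-(k:ℤ) := by omega
    rw [this]
  have h3 : ∑ t ∈ Ico a (a+b-k), (t:ℤ)
      = (∑ t ∈ range (a+b-k), (t:ℤ)) - ∑ t ∈ range a, (t:ℤ) :=
    Finset.sum_Ico_eq_sub _ (by omega)
  have s1 := sum_id k
  have s2 := sum_id (a+b-k)
  have s3 := sum_id a
  have hc : ((a+b-k : ℕ):ℤ) = (a:ℤ)+(b:ℤ)-(k:ℤ) := by omega
  rw [hc] at s2
  rw [ExtT, h1, h2, h3]
  push_cast at s2 s3 ⊢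
  linear_combination (b:ℤ)*s1 + (b:ℤ)*s2 - (b:ℤ)*s3

private lemma ext_sum (a b : ℕ) (hb : 0 < b) :
    6 * ∑ k ∈ Ico 1 b, ExtT a b k
      = (2*(a:ℤ)+(b:ℤ))*((b:ℤ)*((b:ℤ)-1)*(2*(b:ℤ)-1))
        - (6*(a:ℤ)*(b:ℤ)+3*(b:ℤ)^2)*((b:ℤ)*((b:ℤ)-1))
        + 3*((b:ℤ)-1)*((b:ℤ)*(((a:ℤ)+(b:ℤ))*((a:ℤ)+(b:ℤ)-1) - (a:ℤ)*((a:ℤ)-1))) := by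
  have key : ∀ k ∈ Ico 1 b, 2 * ExtT a b k
      = (4*(a:ℤ)+2*(b:ℤ))*(k:ℤ)^2 - (4*(a:ℤ)*(b:ℤ)+2*(b:ℤ)^2)*(k:ℤ)
        + (b:ℤ)*(((a:ℤ)+(b:ℤ))*((a:ℤ)+(b:ℤ)-1) - (a:ℤ)*((a:ℤ)-1)) :=
    fun k hk => ext_val a b k (by have := Finset.mem_Ico.mp hk; omega)
  have h0 : 6 * ∑ k ∈ Ico 1 b, ExtT a b k = 3 * ∑ k ∈ Ico 1 b, 2 * ExtT a b k := by
    rw [← Finset.mul_sum]; ring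
  rw [h0, Finset.sum_congr rfl key]
  have hsplit : ∑ k ∈ Ico 1 b,
      ((4*(a:ℤ)+2*(b:ℤ))*(k:ℤ)^2 - (4*(a:ℤ)*(b:ℤ)+2*(b:ℤ)^2)*(k:ℤ)
        + (b:ℤ)*(((a:ℤ)+(b:ℤ))*((a:ℤ)+(b:ℤ)-1) - (a:ℤ)*((a:ℤ)-1)))
      = (4*(a:ℤ)+2*(b:ℤ))*(∑ k ∈ Ico 1 b, (k:ℤ)^2)
        - (4*(a:ℤ)*(b:ℤ)+2*(b:ℤ)^2)*(∑ k ∈ Ico 1 b, (k:ℤ))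
        + ((b-1:ℕ):ℤ)*((b:ℤ)*(((a:ℤ)+(b:ℤ))*((a:ℤ)+(b:ℤ)-1) - (a:ℤ)*((a:ℤ)-1))) := by
    rw [Finset.sum_add_distrib, Finset.sum_sub_distrib, ← Finset.mul_sum, ← Finset.mul_sum,
      Finset.sum_const, Nat.card_Ico, nsmul_eq_mul]
  rw [hsplit]
  have e1 : ∑ k ∈ Ico 1 b, (k:ℤ) = ∑ k ∈ range b, (k:ℤ) := by
    rw [Finset.range_eq_Ico, Finset.sum_eq_sum_Ico_succ_bot hb]
    simp
  have e2 : ∑ k ∈ Ico 1 b, (k:ℤ)^2 = ∑ k ∈ range b, (k:ℤ)^2 := by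
    rw [Finset.range_eq_Ico, Finset.sum_eq_sum_Ico_succ_bot hb]
    simp
  have s1 := sum_id b
  have s2 := sum_sq b
  have hc : ((b-1 : ℕ):ℤ) = (b:ℤ)-1 := by omega
  rw [e1, e2, hc]
  linear_combination (2*(a:ℤ)+(b:ℤ))*s2 - (6*(a:ℤ)*(b:ℤ)+3*(b:ℤ)^2)*s1

private lemma dval_aux (n : ℕ) : ∀ a b : ℕ, a + b = n → 0 < a → 0 < b → Nat.Coprime a b →
    6 * Dsum a b = ((a:ℤ)-1)*((b:ℤ)-1)*(2*(a:ℤ)*(b:ℤ)-(a:ℤ)-(b:ℤ)-1) := by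
  induction n using Nat.strong_induction_on with
  | _ n ih =>
    intro a b hn ha hb hab
    rcases eq_or_lt_of_le (show 1 ≤ a from ha) with h1 | h1
    · -- a = 1
      have ha1 : a = 1 := h1.symm
      subst ha1
      have : Dsum 1 b = 0 := by
        rw [Dsum]
        apply Finset.sum_eq_zero
        intro k hk
        simp
      rw [this]
      push_cast
      ring
    · rcases eq_or_lt_of_le (show 1 ≤ b from hb) with h2 | h2
      · have hb1 : b = 1 := h2.symm
        subst hb1
        have : Dsum a 1 = 0 := by rw [Dsum]; simp
        rw [this]
        push_cast
        ring
      · -- a ≥ 2, b ≥ 2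
        have hne : a ≠ b := by
          intro he
          subst he
          rw [Nat.Coprime, Nat.gcd_self] at hab
          omega
        rcases Nat.lt_or_ge a b with hlt | hge
        · -- a < b : reduce b
          set c := b - a with hc
          have hc1 : 0 < c := by omega
          have hcb : c + a = b := by omega
          have hcop : Nat.Coprime c a := by
            rw [hc]
            exact (Nat.coprime_sub_self_left (by omega)).mpr hab.symm
          have hih := ih b (by omega) c a (by omega) hc1 ha hcop
          have hstep := Dstep c a hc1 ha
          rw [hcb] at hstep
          have hext := ext_sum c a ha
          have hcast : ((c:ℕ):ℤ) = (b:ℤ) - (a:ℤ) := by omega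
          rw [hcast] at hih hext
          rw [Dsymm a b]
          linear_combination 6*hstep + hih + hext
        · -- a > b : reduce a
          have hlt : b < a := by omega
          set c := a - b with hc
          have hc1 : 0 < c := by omega
          have hcb : c + b = a := by omega
          have hcop : Nat.Coprime c b := by
            rw [hc]
            exact (Nat.coprime_sub_self_left (by omega)).mpr hab
          have hih := ih a (by omega) c b (by omega) hc1 hb hcop
          have hstep := Dstep c b hc1 hb
          rw [hcb] at hstep
          have hext := ext_sum c b hb
          have hcast : ((c:ℕ):ℤ) = (a:ℤ) - (b:ℤ) := by omega
          rw [hcast] at hih hext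
          linear_combination 6*hstep + hih + hext

private lemma dval (a b : ℕ) (ha : 0 < a) (hb : 0 < b) (hab : Nat.Coprime a b) :
    6 * Dsum a b = ((a:ℤ)-1)*((b:ℤ)-1)*(2*(a:ℤ)*(b:ℤ)-(a:ℤ)-(b:ℤ)-1) :=
  dval_aux (a+b) a b rfl ha hb hab

theorem salie (a b : ℕ) (ha : 0 < a) (hb : 0 < b) (hab : Nat.Coprime a b) :
    4 * a * inv' a b + 4 * b * inv' b a = (a - 1) * (b - 1) * (a + b - 1) := by
  have key : 4*(a:ℤ)*(inv' a b : ℤ) + 4*(b:ℤ)*(inv' b a : ℤ)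
      = ((a:ℤ)-1)*((b:ℤ)-1)*((a:ℤ)+(b:ℤ)-1) := by
    have h1 := two_inv a b ha hb hab
    have h2 := two_inv b a hb ha hab.symm
    have h3 := recip a b ha hb hab
    have h4 := dval a b ha hb hab
    linear_combination 2*(a:ℤ)*h1 + 2*(b:ℤ)*h2 + 3*h3 + h4
  have e1 : 1 ≤ a := ha
  have e2 : 1 ≤ b := hb
  have e3 : 1 ≤ a + b := by omega
  zify [e1, e2, e3]
  linear_combination key
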